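/- Let G_{τ₁,m} and G_{τ₂,m} be the historical m-hop subgraphs of node triplets of interest τ₁ = ({u,v},w,t) in a temporal hypergraph 𝓔₁ and τ₂ = ({u',v'},w',t') in a temporal hypergraph 𝓔₂, and suppose they are isomorphic via a bijection π with time offset Δ = t' − t. Assume that every state (z,s) reachable in at most m sampling steps from any of the start states (u,t), (v,t), (w,t) within G_{τ₁,m} has a nonempty candidate set, so that the length-m annotated temporal random walk distributions are well-defined probability distributions (the same then holds in G_{τ₂,m}). Let S₁ = S_u ∪ S_v ∪ S_w, where S_u, S_v, S_w each consist of M independently sampled length-m annotated temporal random walks within G_{τ₁,m} starting at (u,t), (v,t), (w,t) respectively, and let S₂ = S_{u'} ∪ S_{v'} ∪ S_{w'} be defined analogously within G_{τ₂,m} with start states (u',t'), (v',t'), (w',t'). Then for every node a of G_{τ₁,m}, the probability that a appears on some walk of S₁ equals the probability that π(a) appears on some walk of S₂. -/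

import Mathlib

/-!
STATEMENT 0: If the historical m-hop subgraphs of two node triplets of interest
τ₁ = ({u,v},w,t) and τ₂ = ({u',v'},w',t') are isomorphic via π with time offset Δ = t'−t,
and all states reachable in at most m sampling steps from the start states have nonempty
candidate sets, then for every node a of G_{τ₁,m}, the probability that a appears on some
walk of S₁ = S_u ∪ S_v ∪ S_w (M independent length-m annotated temporal random walks from
each of (u,t),(v,t),(w,t)) equals the probability that π(a) appears on some walk of
S₂ = S_{u'} ∪ S_{v'} ∪ S_{w'} (sampled analogously in G_{τ₂,m}).
-/

open scoped Classical

namespace HIT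

variable {V V' : Type*}

/-- The candidate set `C(z,s)` of temporal hyperedges containing `z` with timestamp before `s`. -/
noncomputable def cand (H : Finset (Finset V × ℝ)) (z : V) (s : ℝ) :
    Finset (Finset V × ℝ) :=
  H.filter (fun et => z ∈ et.1 ∧ et.2 < s)

/-- The sampling weight `w(e,t;s) = (|e|−1)·exp(α·(s−t))` of a temporal hyperedge. -/
noncomputable def weight (α : ℝ) (s : ℝ) (et : Finset V × ℝ) : ℝ :=
  ((et.1.card : ℝ) - 1) * Real.exp (α * (s - et.2))

/-- An annotated temporal random walk, recorded as the list of steps `((e_l,t_l),z_l)`,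
is valid from current node `z` and current time `s` if each hyperedge is a candidate at the
current state and the next node is drawn from the hyperedge minus the current node. -/
def ValidWalk (H : Finset (Finset V × ℝ)) : V → ℝ → List ((Finset V × ℝ) × V) → Prop
  | _, _, [] => True
  | z, s, (et, z') :: rest =>
      et ∈ H ∧ z ∈ et.1 ∧ et.2 < s ∧ z' ∈ et.1 ∧ z' ≠ z ∧ ValidWalk H z' et.2 rest

/-- The sampling probability `P(W)` of an annotated temporal random walk. -/
noncomputable def walkProb (α : ℝ) (H : Finset (Finset V × ℝ)) :
    V → ℝ → List ((Finset V × ℝ) × V) → ℝ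
  | _, _, [] => 1
  | z, s, (et, z') :: rest =>
      (weight α s et / ∑ et' ∈ cand H z s, weight α s et') *
        (1 / ((et.1.card : ℝ) - 1)) * walkProb α H z' et.2 rest

/-- The state (current node, current time) reached after following a walk. -/
def endState : V → ℝ → List ((Finset V × ℝ) × V) → V × ℝ
  | z, s, [] => (z, s)
  | _, _, (et, z') :: rest => endState z' et.2 rest

/-- The node set of a temporal hypergraph: all nodes covered by its hyperedges. -/
noncomputable def nodes [DecidableEq V] (H : Finset (Finset V × ℝ)) : Finset V :=
  H.biUnion (fun et => et.1)

/-- `π` together with the time offset `Δ` is an isomorphism of temporal hypergraphs from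
`H1` to `H2`: `π` is a bijection from the node set of `H1` onto the node set of `H2`, and
`(ẽ,t̃)` is a temporal hyperedge of `H1` iff `(π(ẽ), t̃+Δ)` is a temporal hyperedge of `H2`. -/
structure IsIso [DecidableEq V] [DecidableEq V'] (π : V → V') (Δ : ℝ)
    (H1 : Finset (Finset V × ℝ)) (H2 : Finset (Finset V' × ℝ)) : Prop where
  injOn : Set.InjOn π (nodes H1 : Set V)
  image_nodes : (nodes H1).image π = nodes H2
  map_mem : ∀ e s, (e, s) ∈ H1 → (e.image π, s + Δ) ∈ H2
  mem_map : ∀ e' s', (e', s') ∈ H2 → ∃ e s, (e, s) ∈ H1 ∧ e' = e.image π ∧ s' = s + Δ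

/-- A length-`m` sequence of sampling steps, each step consisting of a temporal hyperedge
of `H` and a next node. -/
abbrev StepSeq (H : Finset (Finset V × ℝ)) (m : ℕ) := Fin m → ({x // x ∈ H} × V)

/-- Encode a step sequence as a walk (a list of steps). -/
def stepToList {H : Finset (Finset V × ℝ)} {m : ℕ} (f : StepSeq H m) :
    List ((Finset V × ℝ) × V) :=
  List.ofFn fun i => (((f i).1 : Finset V × ℝ), (f i).2)

/-- The probability of sampling a given step sequence as an annotated temporal random walk
starting at `(z0, t0)` (zero if the sequence is not a valid walk). -/
noncomputable def sampleProb (α : ℝ) (H : Finset (Finset V × ℝ)) (z0 : V) (t0 : ℝ)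
    {m : ℕ} (f : StepSeq H m) : ℝ :=
  if ValidWalk H z0 t0 (stepToList f) then walkProb α H z0 t0 (stepToList f) else 0

/-- The node at position `i ∈ {0,…,m}` of a walk given by a step sequence starting at `z0`. -/
def nodeAt {H : Finset (Finset V × ℝ)} {m : ℕ} (z0 : V) (f : StepSeq H m)
    (i : Fin (m + 1)) : V :=
  if h : i = 0 then z0 else (f (i.pred h)).2

/-- An outcome `ω` of the whole sampling experiment consists of `M` step sequences for each
of the three start nodes; the node `a` appears in the sampled walks if it is the node at
some position of some of the `3M` walks. -/
def appearsOn {H : Finset (Finset V × ℝ)} {m M : ℕ} (starts : Fin 3 → V)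
    (ω : Fin 3 → Fin M → StepSeq H m) (a : V) : Prop :=
  ∃ j i p, nodeAt (starts j) (ω j i) p = a

/-- The joint probability of an outcome: the `3M` walks are sampled independently, `M` from
each start node, all with initial time `t0`. -/
noncomputable def jointProb (α : ℝ) (H : Finset (Finset V × ℝ)) (starts : Fin 3 → V)
    (t0 : ℝ) {m M : ℕ} (ω : Fin 3 → Fin M → StepSeq H m) : ℝ :=
  ∏ j, ∏ i, sampleProb α H (starts j) t0 (ω j i)

/-- The probability that the node `a` appears on some walk of `S₁ = S_u ∪ S_v ∪ S_w`. -/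
noncomputable def appearProb [Fintype V] (α : ℝ) (H : Finset (Finset V × ℝ))
    (starts : Fin 3 → V) (t0 : ℝ) (m M : ℕ) (a : V) : ℝ :=
  ∑ ω : Fin 3 → Fin M → StepSeq H m,
    if appearsOn starts ω a then jointProb α H starts t0 ω else 0

section Aux

variable [DecidableEq V] [DecidableEq V']

lemma mem_nodes_of_mem {H : Finset (Finset V × ℝ)} {et : Finset V × ℝ}
    (h : et ∈ H) {b : V} (hb : b ∈ et.1) : b ∈ nodes H :=
  Finset.mem_biUnion.2 ⟨et, h, hb⟩

lemma subset_nodes {H : Finset (Finset V × ℝ)} {et : Finset V × ℝ}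
    (h : et ∈ H) : et.1 ⊆ nodes H :=
  fun _ hb => mem_nodes_of_mem h hb

lemma validWalk_mem {H : Finset (Finset V × ℝ)} :
    ∀ {L : List ((Finset V × ℝ) × V)} {z : V} {s : ℝ}, ValidWalk H z s L →
      ∀ x ∈ L, x.1 ∈ H ∧ x.2 ∈ x.1.1
  | [], _, _, _ => by intro x hx; simp at hx
  | (et, z') :: rest, z, s, h => by
      obtain ⟨hH, _, _, hz'e, _, hrest⟩ := h
      intro x hx
      rcases List.mem_cons.1 hx with hx | hx
      · subst hx; exact ⟨hH, hz'e⟩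
      · exact validWalk_mem hrest x hx

variable {H1 : Finset (Finset V × ℝ)} {H2 : Finset (Finset V' × ℝ)}
variable {π : V → V'} {Δ : ℝ}

/-- The map on annotated steps induced by `π` and `Δ`. -/
def pstep (π : V → V') (Δ : ℝ) : (Finset V × ℝ) × V → (Finset V' × ℝ) × V' :=
  fun x => ((x.1.1.image π, x.1.2 + Δ), π x.2)

lemma mem_image_iff (hinj : Set.InjOn π (nodes H1 : Set V)) {e : Finset V}
    (he : e ⊆ nodes H1) {z : V} (hz : z ∈ nodes H1) :
    π z ∈ e.image π ↔ z ∈ e := by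
  constructor
  · intro h
    obtain ⟨b, hb, hba⟩ := Finset.mem_image.1 h
    exact hinj (he hb) hz hba ▸ hb
  · exact Finset.mem_image_of_mem π

lemma image_eq_of (hinj : Set.InjOn π (nodes H1 : Set V)) {e₁ e₂ : Finset V}
    (h₁ : e₁ ⊆ nodes H1) (h₂ : e₂ ⊆ nodes H1) (h : e₁.image π = e₂.image π) :
    e₁ = e₂ := by
  ext b
  constructor
  · intro hb
    have : π b ∈ e₂.image π := h ▸ Finset.mem_image_of_mem π hb
    exact (mem_image_iff hinj h₂ (h₁ hb)).1 this
  · intro hb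
    have : π b ∈ e₁.image π := h.symm ▸ Finset.mem_image_of_mem π hb
    exact (mem_image_iff hinj h₁ (h₂ hb)).1 this

lemma weight_image (hinj : Set.InjOn π (nodes H1 : Set V)) {e : Finset V}
    (he : e ⊆ nodes H1) (α s r : ℝ) :
    weight α (s + Δ) (e.image π, r + Δ) = weight α s (e, r) := by
  have hc : (e.image π).card = e.card :=
    Finset.card_image_of_injOn (hinj.mono (by exact_mod_cast he))
  simp only [weight, hc]
  have : s + Δ - (r + Δ) = s - r := by ring
  rw [this]

lemma cand_image (hiso : IsIso π Δ H1 H2) {z : V} (hz : z ∈ nodes H1) (s : ℝ) :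
    cand H2 (π z) (s + Δ) = (cand H1 z s).image (fun et => (et.1.image π, et.2 + Δ)) := by
  ext x
  simp only [cand, Finset.mem_filter, Finset.mem_image]
  constructor
  · rintro ⟨hx, hzx, hts⟩
    obtain ⟨e, s0, he, he1, he2⟩ := hiso.mem_map x.1 x.2 (by rwa [Prod.mk.eta])
    refine ⟨(e, s0), ⟨he, ?_, ?_⟩, ?_⟩
    · exact (mem_image_iff hiso.injOn (subset_nodes he) hz).1 (he1 ▸ hzx)
    · have : x.2 = s0 + Δ := he2
      linarith [hts]
    · exact Prod.ext he1.symm he2.symm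
  · rintro ⟨et, ⟨he, hze, hs0⟩, rfl⟩
    refine ⟨hiso.map_mem et.1 et.2 (by rwa [Prod.mk.eta]), ?_, ?_⟩
    · exact Finset.mem_image_of_mem π hze
    · simpa using by linarith [hs0]

lemma mem_cand {H : Finset (Finset V × ℝ)} {x : Finset V × ℝ} {z : V} {s : ℝ} :
    x ∈ cand H z s ↔ x ∈ H ∧ z ∈ x.1 ∧ x.2 < s := by
  simp [cand]

lemma sum_weight_map (hiso : IsIso π Δ H1 H2) {z : V} (hz : z ∈ nodes H1) (α s : ℝ) :
    ∑ et' ∈ cand H2 (π z) (s + Δ), weight α (s + Δ) et' =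
      ∑ et' ∈ cand H1 z s, weight α s et' := by
  rw [cand_image hiso hz s, Finset.sum_image ?inj]
  · refine Finset.sum_congr rfl fun et het => ?_
    have hsub : et.1 ⊆ nodes H1 := subset_nodes (mem_cand.1 het).1
    have := weight_image (Δ := Δ) hiso.injOn hsub α s et.2
    simpa using this
  case inj =>
    intro x hx y hy hxy
    have h1 : x.1.image π = y.1.image π := (Prod.ext_iff.1 hxy).1
    have h2 : x.2 + Δ = y.2 + Δ := by
      have := (Prod.ext_iff.1 hxy).2; simpa using this
    exact Prod.ext
      (image_eq_of hiso.injOn (subset_nodes (mem_cand.1 hx).1)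
        (subset_nodes (mem_cand.1 hy).1) h1)
      (by linarith)

lemma valid_map (hiso : IsIso π Δ H1 H2) :
    ∀ (L : List ((Finset V × ℝ) × V)) {z : V} {s : ℝ}, z ∈ nodes H1 →
      ValidWalk H1 z s L → ValidWalk H2 (π z) (s + Δ) (L.map (pstep π Δ))
  | [], _, _, _, _ => trivial
  | (et, z') :: rest, z, s, hz, h => by
      obtain ⟨hH, hze, hts, hz'e, hne, hrest⟩ := h
      have hz' : z' ∈ nodes H1 := mem_nodes_of_mem hH hz'e
      refine ⟨hiso.map_mem et.1 et.2 (by rwa [Prod.mk.eta]), ?_, by simpa using by linarith, ?_, ?_, ?_⟩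
      · exact Finset.mem_image_of_mem π hze
      · exact Finset.mem_image_of_mem π hz'e
      · intro heq
        exact hne (hiso.injOn hz' hz heq)
      · exact valid_map hiso rest hz' hrest

lemma valid_of_map (hiso : IsIso π Δ H1 H2) :
    ∀ (L : List ((Finset V × ℝ) × V)) {z : V} {s : ℝ}, z ∈ nodes H1 →
      (∀ x ∈ L, x.1 ∈ H1 ∧ x.2 ∈ nodes H1) →
      ValidWalk H2 (π z) (s + Δ) (L.map (pstep π Δ)) → ValidWalk H1 z s L
  | [], _, _, _, _, _ => trivial
  | (et, z') :: rest, z, s, hz, hL, h => by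
      obtain ⟨_, hze, hts, hz'e, hne, hrest⟩ := h
      obtain ⟨hH, hz'⟩ := hL (et, z') List.mem_cons_self
      have hets : et.2 + Δ < s + Δ := hts
      refine ⟨hH, ?_, by linarith, ?_, ?_, ?_⟩
      · exact (mem_image_iff hiso.injOn (subset_nodes hH) hz).1 hze
      · exact (mem_image_iff hiso.injOn (subset_nodes hH) hz').1 hz'e
      · intro heq; exact hne (heq ▸ rfl)
      · exact valid_of_map hiso rest ((mem_image_iff hiso.injOn (subset_nodes hH) hz').1 hz'e
          |> mem_nodes_of_mem hH) (fun x hx => hL x (List.mem_cons_of_mem _ hx)) hrest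

lemma walkProb_map (hiso : IsIso π Δ H1 H2) (α : ℝ) :
    ∀ (L : List ((Finset V × ℝ) × V)) {z : V} {s : ℝ}, z ∈ nodes H1 →
      ValidWalk H1 z s L →
      walkProb α H2 (π z) (s + Δ) (L.map (pstep π Δ)) = walkProb α H1 z s L
  | [], _, _, _, _ => rfl
  | (et, z') :: rest, z, s, hz, h => by
      obtain ⟨hH, hze, hts, hz'e, hne, hrest⟩ := h
      have hz' : z' ∈ nodes H1 := mem_nodes_of_mem hH hz'e
      show (weight α (s + Δ) (et.1.image π, et.2 + Δ) /
          ∑ et' ∈ cand H2 (π z) (s + Δ), weight α (s + Δ) et') *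
          (1 / (((et.1.image π).card : ℝ) - 1)) *
          walkProb α H2 (π z') (et.2 + Δ) (rest.map (pstep π Δ)) = _
      rw [walkProb_map hiso α rest hz' hrest, sum_weight_map hiso hz α s,
        weight_image hiso.injOn (subset_nodes hH) α s et.2,
        Finset.card_image_of_injOn (hiso.injOn.mono (by exact_mod_cast subset_nodes hH))]
      rfl

/-- The induced map on hyperedges of `H1` (as a subtype). -/
def Emap (hiso : IsIso π Δ H1 H2) (x : {y // y ∈ H1}) : {y // y ∈ H2} :=
  ⟨(x.1.1.image π, x.1.2 + Δ), hiso.map_mem x.1.1 x.1.2 (by rw [Prod.mk.eta]; exact x.2)⟩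

/-- An inverse of `Emap`, via choice. -/
noncomputable def Einv (hiso : IsIso π Δ H1 H2) (x : {y // y ∈ H2}) : {y // y ∈ H1} :=
  ⟨((hiso.mem_map x.1.1 x.1.2 (by rw [Prod.mk.eta]; exact x.2)).choose,
    (hiso.mem_map x.1.1 x.1.2 (by rw [Prod.mk.eta]; exact x.2)).choose_spec.choose),
   (hiso.mem_map x.1.1 x.1.2 (by rw [Prod.mk.eta]; exact x.2)).choose_spec.choose_spec.1⟩

lemma Einv_spec (hiso : IsIso π Δ H1 H2) (x : {y // y ∈ H2}) :
    x.1.1 = ((Einv hiso x).1.1).image π ∧ x.1.2 = (Einv hiso x).1.2 + Δ :=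
  ⟨(hiso.mem_map x.1.1 x.1.2 (by rw [Prod.mk.eta]; exact x.2)).choose_spec.choose_spec.2.1,
   (hiso.mem_map x.1.1 x.1.2 (by rw [Prod.mk.eta]; exact x.2)).choose_spec.choose_spec.2.2⟩

lemma Emap_Einv (hiso : IsIso π Δ H1 H2) (x : {y // y ∈ H2}) :
    Emap hiso (Einv hiso x) = x := by
  apply Subtype.ext
  exact Prod.ext (Einv_spec hiso x).1.symm (Einv_spec hiso x).2.symm

lemma Einv_Emap (hiso : IsIso π Δ H1 H2) (x : {y // y ∈ H1}) :
    Einv hiso (Emap hiso x) = x := by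
  apply Subtype.ext
  have hs := Einv_spec hiso (Emap hiso x)
  refine Prod.ext ?_ ?_
  · exact (image_eq_of hiso.injOn (subset_nodes (Einv hiso (Emap hiso x)).2)
      (subset_nodes x.2) hs.1.symm)
  · have : x.1.2 + Δ = (Einv hiso (Emap hiso x)).1.2 + Δ := hs.2
    linarith

/-- The induced map on step sequences. -/
def Smap (hiso : IsIso π Δ H1 H2) {m : ℕ} (f : StepSeq H1 m) : StepSeq H2 m :=
  fun i => (Emap hiso (f i).1, π (f i).2)

/-- An inverse of `Smap`, via choice. -/
noncomputable def Sinv [Nonempty V] (hiso : IsIso π Δ H1 H2) {m : ℕ}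
    (g : StepSeq H2 m) : StepSeq H1 m :=
  fun i => (Einv hiso (g i).1, Function.invFunOn π (nodes H1 : Set V) (g i).2)

lemma stepToList_Smap (hiso : IsIso π Δ H1 H2) {m : ℕ} (f : StepSeq H1 m) :
    stepToList (Smap hiso f) = (stepToList f).map (pstep π Δ) := by
  simp only [stepToList, Smap, List.map_ofFn]
  rfl

lemma step_mem_stepToList {H : Finset (Finset V × ℝ)} {m : ℕ} (f : StepSeq H m)
    (i : Fin m) : ((f i).1.1, (f i).2) ∈ stepToList f :=
  List.mem_ofFn.2 ⟨i, rfl⟩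

lemma valid_node_mem {H : Finset (Finset V × ℝ)} {m : ℕ} {f : StepSeq H m}
    {z0 : V} {t0 : ℝ} (h : ValidWalk H z0 t0 (stepToList f)) (i : Fin m) :
    (f i).2 ∈ nodes H := by
  have hx := validWalk_mem h _ (step_mem_stepToList f i)
  exact mem_nodes_of_mem hx.1 hx.2

lemma validS_map (hiso : IsIso π Δ H1 H2) {m : ℕ} {f : StepSeq H1 m} {z : V} {s : ℝ}
    (hz : z ∈ nodes H1) (h : ValidWalk H1 z s (stepToList f)) :
    ValidWalk H2 (π z) (s + Δ) (stepToList (Smap hiso f)) := by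
  rw [stepToList_Smap]; exact valid_map hiso _ hz h

lemma Smap_Sinv [Nonempty V] (hiso : IsIso π Δ H1 H2) {m : ℕ} {g : StepSeq H2 m}
    (hg : ∀ i, (g i).2 ∈ nodes H2) : Smap hiso (Sinv hiso g) = g := by
  funext i
  refine Prod.ext (Emap_Einv hiso (g i).1) ?_
  have : (g i).2 ∈ π '' (nodes H1 : Set V) := by
    rw [← Finset.coe_image, hiso.image_nodes]
    exact_mod_cast hg i
  exact Function.invFunOn_eq (by obtain ⟨b, hb, hbe⟩ := this; exact ⟨b, hb, hbe⟩)

lemma Sinv_Smap [Nonempty V] (hiso : IsIso π Δ H1 H2) {m : ℕ} {f : StepSeq H1 m}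
    (hf : ∀ i, (f i).2 ∈ nodes H1) : Sinv hiso (Smap hiso f) = f := by
  funext i
  exact Prod.ext (Einv_Emap hiso (f i).1) (hiso.injOn.leftInvOn_invFunOn (hf i))

lemma validS_inv [Nonempty V] (hiso : IsIso π Δ H1 H2) {m : ℕ} {g : StepSeq H2 m}
    {z : V} {s : ℝ} (hz : z ∈ nodes H1)
    (h : ValidWalk H2 (π z) (s + Δ) (stepToList g)) :
    ValidWalk H1 z s (stepToList (Sinv hiso g)) ∧ Smap hiso (Sinv hiso g) = g := by
  have hg : ∀ i, (g i).2 ∈ nodes H2 := valid_node_mem h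
  have heq : Smap hiso (Sinv hiso g) = g := Smap_Sinv hiso hg
  refine ⟨?_, heq⟩
  apply valid_of_map hiso _ hz
  · intro x hx
    obtain ⟨i, hi⟩ := List.mem_ofFn.1 hx
    subst hi
    constructor
    · exact ((Sinv hiso g) i).1.2
    · show Function.invFunOn π (nodes H1 : Set V) (g i).2 ∈ nodes H1
      have : (g i).2 ∈ π '' (nodes H1 : Set V) := by
        rw [← Finset.coe_image, hiso.image_nodes]
        exact_mod_cast hg i
      obtain ⟨b, hb, hbe⟩ := this
      exact Function.invFunOn_mem ⟨b, hb, hbe⟩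
  · rw [← stepToList_Smap hiso, heq]; exact h

lemma sampleProb_map (hiso : IsIso π Δ H1 H2) {m : ℕ} {f : StepSeq H1 m}
    {z0 : V} {t0 : ℝ} (α : ℝ) (hz : z0 ∈ nodes H1)
    (hval : ValidWalk H1 z0 t0 (stepToList f)) :
    sampleProb α H2 (π z0) (t0 + Δ) (Smap hiso f) = sampleProb α H1 z0 t0 f := by
  rw [sampleProb, sampleProb, if_pos hval, if_pos (validS_map hiso hz hval),
    stepToList_Smap]
  exact walkProb_map hiso α _ hz hval

lemma nodeAt_Smap (hiso : IsIso π Δ H1 H2) {m : ℕ} (f : StepSeq H1 m) (z0 : V)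
    (p : Fin (m + 1)) : nodeAt (π z0) (Smap hiso f) p = π (nodeAt z0 f p) := by
  unfold nodeAt
  split <;> rfl

lemma nodeAt_mem_nodes {H : Finset (Finset V × ℝ)} {m : ℕ} {f : StepSeq H m}
    {z0 : V} {t0 : ℝ} (hz : z0 ∈ nodes H) (h : ValidWalk H z0 t0 (stepToList f))
    (p : Fin (m + 1)) : nodeAt z0 f p ∈ nodes H := by
  unfold nodeAt
  split
  · exact hz
  · exact valid_node_mem h _

end Aux

theorem appearProb_eq_of_iso [Fintype V] [Fintype V'] [DecidableEq V] [DecidableEq V']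
    (H1 : Finset (Finset V × ℝ)) (H2 : Finset (Finset V' × ℝ))
    (hcard1 : ∀ et ∈ H1, 2 ≤ et.1.card) (hcard2 : ∀ et ∈ H2, 2 ≤ et.1.card)
    (α : ℝ) (hα : 0 ≤ α) (m M : ℕ)
    (u v w : V) (u' v' w' : V') (t t' : ℝ) (π : V → V') (Δ : ℝ) (hΔ : Δ = t' - t)
    (hiso : IsIso π Δ H1 H2)
    (hUV : ({π u, π v} : Finset V') = {u', v'}) (hW : π w = w')
    (hreach : ∀ z0, (z0 = u ∨ z0 = v ∨ z0 = w) →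
      ∀ L : List ((Finset V × ℝ) × V), L.length ≤ m → ValidWalk H1 z0 t L →
        (cand H1 (endState z0 t L).1 (endState z0 t L).2).Nonempty)
    (a : V) (ha : a ∈ nodes H1) :
    appearProb α H1 ![u, v, w] t m M a = appearProb α H2 ![u', v', w'] t' m M (π a) := by
  classical
  haveI : Nonempty V := ⟨a⟩
  have hstart : ∀ z0, z0 = u ∨ z0 = v ∨ z0 = w → z0 ∈ nodes H1 := by
    intro z0 hz0
    obtain ⟨et, het⟩ := hreach z0 hz0 [] (by simp) trivial
    have h := mem_cand.1 het
    exact mem_nodes_of_mem h.1 h.2.1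
  have ht' : t' = t + Δ := by rw [hΔ]; ring
  have huv : (π u = u' ∧ π v = v') ∨ (π u = v' ∧ π v = u') := by
    have h1 : π u = u' ∨ π u = v' := by
      have : π u ∈ ({u', v'} : Finset V') := hUV ▸ Finset.mem_insert_self _ _
      simpa using this
    have h2 : π v = u' ∨ π v = v' := by
      have : π v ∈ ({u', v'} : Finset V') := by
        rw [← hUV]; exact Finset.mem_insert_of_mem (Finset.mem_singleton_self _)
      simpa using this
    have h3 : u' = π u ∨ u' = π v := by
      have : u' ∈ ({π u, π v} : Finset V') := hUV.symm ▸ Finset.mem_insert_self _ _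
      simpa using this
    have h4 : v' = π u ∨ v' = π v := by
      have : v' ∈ ({π u, π v} : Finset V') := by
        rw [hUV]; exact Finset.mem_insert_of_mem (Finset.mem_singleton_self _)
      simpa using this
    rcases h1 with h1 | h1 <;> rcases h2 with h2 | h2
    · -- π u = u', π v = u'
      have hv'u' : v' = u' := by
        rcases h4 with h4 | h4
        · rw [h4, h1]
        · rw [h4, h2]
      exact Or.inl ⟨h1, h2.trans hv'u'.symm⟩
    · exact Or.inl ⟨h1, h2⟩
    · exact Or.inr ⟨h1, h2⟩
    · -- π u = v', π v = v'
      have hu'v' : u' = v' := by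
        rcases h3 with h3 | h3
        · rw [h3, h1]
        · rw [h3, h2]
      exact Or.inl ⟨h1.trans hu'v'.symm, h2⟩
  obtain ⟨σ, hσ⟩ : ∃ σ : Equiv.Perm (Fin 3),
      ∀ j, π (![u, v, w] j) = ![u', v', w'] (σ j) := by
    rcases huv with ⟨h1, h2⟩ | ⟨h1, h2⟩
    · exact ⟨Equiv.refl _, by intro j; fin_cases j <;> simp [h1, h2, hW]⟩
    · refine ⟨Equiv.swap 0 1, ?_⟩
      intro j
      fin_cases j <;> simp [Equiv.swap_apply_def, h1, h2, hW]
  have hs1mem : ∀ j : Fin 3, (![u, v, w] : Fin 3 → V) j ∈ nodes H1 := by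
    intro j
    fin_cases j
    · simpa using hstart u (Or.inl rfl)
    · simpa using hstart v (Or.inr (Or.inl rfl))
    · simpa using hstart w (Or.inr (Or.inr rfl))
  set P1 : (Fin 3 → Fin M → StepSeq H1 m) → Prop :=
    fun ω => ∀ j i, ValidWalk H1 (![u, v, w] j) t (stepToList (ω j i)) with hP1
  set P2 : (Fin 3 → Fin M → StepSeq H2 m) → Prop :=
    fun ω => ∀ j i, ValidWalk H2 (![u', v', w'] j) t' (stepToList (ω j i)) with hP2
  have e1 : appearProb α H1 ![u, v, w] t m M a =
      ∑ ω ∈ Finset.univ.filter P1,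
        (if appearsOn ![u, v, w] ω a then jointProb α H1 ![u, v, w] t ω else 0) := by
    unfold appearProb
    refine (Finset.sum_filter_of_ne ?_).symm
    intro ω _ hne
    by_contra hP
    apply hne
    push_neg at hP
    obtain ⟨j, i, hji⟩ := hP
    have hjoint : jointProb α H1 ![u, v, w] t ω = 0 := by
      unfold jointProb
      refine Finset.prod_eq_zero (Finset.mem_univ j)
        (Finset.prod_eq_zero (Finset.mem_univ i) ?_)
      rw [sampleProb, if_neg hji]
    simp [hjoint]
  have e2 : appearProb α H2 ![u', v', w'] t' m M (π a) =
      ∑ ω ∈ Finset.univ.filter P2,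
        (if appearsOn ![u', v', w'] ω (π a) then jointProb α H2 ![u', v', w'] t' ω else 0) := by
    unfold appearProb
    refine (Finset.sum_filter_of_ne ?_).symm
    intro ω _ hne
    by_contra hP
    apply hne
    push_neg at hP
    obtain ⟨j, i, hji⟩ := hP
    have hjoint : jointProb α H2 ![u', v', w'] t' ω = 0 := by
      unfold jointProb
      refine Finset.prod_eq_zero (Finset.mem_univ j)
        (Finset.prod_eq_zero (Finset.mem_univ i) ?_)
      rw [sampleProb, if_neg hji]
    simp [hjoint]
  rw [e1, e2]
  refine Finset.sum_nbij'
    (fun ω j i => Smap hiso (ω (σ.symm j) i))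
    (fun ω' j i => Sinv hiso (ω' (σ j) i)) ?_ ?_ ?_ ?_ ?_
  · -- maps into filter P2
    intro ω hω
    have hv := (Finset.mem_filter.1 hω).2
    refine Finset.mem_filter.2 ⟨Finset.mem_univ _, fun j i => ?_⟩
    have hval := validS_map hiso (hs1mem (σ.symm j)) (hv (σ.symm j) i)
    have h2 := hσ (σ.symm j)
    rw [Equiv.apply_symm_apply] at h2
    rw [← h2, ht']
    exact hval
  · -- inverse maps into filter P1
    intro ω' hω'
    have hv := (Finset.mem_filter.1 hω').2
    refine Finset.mem_filter.2 ⟨Finset.mem_univ _, fun j i => ?_⟩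
    have hw2 : ValidWalk H2 (π (![u, v, w] j)) (t + Δ) (stepToList (ω' (σ j) i)) := by
      rw [hσ j, ← ht']
      exact hv (σ j) i
    exact (validS_inv hiso (hs1mem j) hw2).1
  · -- left inverse
    intro ω hω
    have hv := (Finset.mem_filter.1 hω).2
    funext j i
    show Sinv hiso (Smap hiso (ω (σ.symm (σ j)) i)) = ω j i
    rw [Equiv.symm_apply_apply]
    exact Sinv_Smap hiso (fun k => valid_node_mem (hv j i) k)
  · -- right inverse
    intro ω' hω'
    have hv := (Finset.mem_filter.1 hω').2
    funext j i
    show Smap hiso (Sinv hiso (ω' (σ (σ.symm j)) i)) = ω' j i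
    rw [Equiv.apply_symm_apply]
    have hw2 : ValidWalk H2 (π (![u, v, w] (σ.symm j))) (t + Δ) (stepToList (ω' j i)) := by
      rw [hσ (σ.symm j), Equiv.apply_symm_apply, ← ht']
      exact hv j i
    exact (validS_inv hiso (hs1mem (σ.symm j)) hw2).2
  · -- terms agree
    intro ω hω
    have hv := (Finset.mem_filter.1 hω).2
    have hJ : jointProb α H2 ![u', v', w'] t' (fun j i => Smap hiso (ω (σ.symm j) i))
        = jointProb α H1 ![u, v, w] t ω := by
      unfold jointProb
      rw [← Equiv.prod_comp σ
        (fun j => ∏ i, sampleProb α H2 (![u', v', w'] j) t' (Smap hiso (ω (σ.symm j) i)))]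
      refine Finset.prod_congr rfl fun j _ => Finset.prod_congr rfl fun i _ => ?_
      simp only [Equiv.symm_apply_apply]
      rw [← hσ j, ht']
      exact sampleProb_map hiso α (hs1mem j) (hv j i)
    have hA : appearsOn ![u', v', w'] (fun j i => Smap hiso (ω (σ.symm j) i)) (π a)
        ↔ appearsOn ![u, v, w] ω a := by
      constructor
      · rintro ⟨j, i, p, hp⟩
        refine ⟨σ.symm j, i, p, ?_⟩
        have h2 : (![u', v', w'] : Fin 3 → V') j = π (![u, v, w] (σ.symm j)) := by
          rw [hσ (σ.symm j), Equiv.apply_symm_apply]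
        simp only at hp
        rw [h2, nodeAt_Smap] at hp
        exact hiso.injOn (nodeAt_mem_nodes (hs1mem _) (hv (σ.symm j) i) p) ha hp
      · rintro ⟨j, i, p, hp⟩
        refine ⟨σ j, i, p, ?_⟩
        show nodeAt (![u', v', w'] (σ j)) (Smap hiso (ω (σ.symm (σ j)) i)) p = π a
        rw [Equiv.symm_apply_apply, ← hσ j, nodeAt_Smap, hp]
    exact (if_congr hA hJ rfl).symm

end HIT
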